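/- Fix an integer h ≥ 1 and η = (η₁, ..., η_h) ∈ ℝ^h such that every complex root z of the characteristic polynomial φ_η(z) = 1 + η₁z + ... + η_h z^h satisfies |z| ≥ 1. For each k > h, let D̃^(k) be the (k−h)×k real matrix with D̃^(k)(i,i) = 1, D̃^(k)(i, i+l) = η_l for 1 ≤ l ≤ h, and all other entries 0, and let Null_k(η) = {ξ ∈ ℝ^k : D̃^(k)ξ = 0}, an h-dimensional subspace of ℝ^k. Then there exists a constant C_η > 0, depending only on η, and an integer n₀ such that for every n ≥ n₀ and every k ≥ n, there exists an orthonormal basis ξ^(1), ..., ξ^(h) of Null_k(η) satisfying |ξ_i^(j)|² ≤ C_η · n^{−1} for all 1 ≤ i ≤ k − n and 1 ≤ j ≤ h. -/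

import Mathlib

open Matrix

/-- The banded `(k−h)×k` Toeplitz matrix `D̃^(k)` implementing the order-`h` linear filter
with coefficients `(1, η₁, ..., η_h)`: `D̃(i,i) = 1`, `D̃(i,i+l) = η_l` for `1 ≤ l ≤ h`,
and `0` elsewhere. -/
noncomputable def filterMatrix (h : ℕ) (η : Fin h → ℝ) (k : ℕ) :
    Matrix (Fin (k - h)) (Fin k) ℝ :=
  Matrix.of fun i j =>
    if (j : ℕ) = (i : ℕ) then 1
    else if hij : (i : ℕ) < (j : ℕ) ∧ (j : ℕ) ≤ (i : ℕ) + h then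
      η ⟨(j : ℕ) - (i : ℕ) - 1, by omega⟩
    else 0

open Polynomial Finset


/-- Reversed coefficient function: `etaRev h η e = η (h-1-e)` for `e < h`, else `0`. -/
noncomputable def etaRev (h : ℕ) (η : Fin h → ℝ) (e : ℕ) : ℝ :=
  if he : e < h then η ⟨h - 1 - e, by omega⟩ else 0

/-- The reversed characteristic polynomial `ψ(x) = x^h + ∑_{e<h} etaRev e x^e`. -/
noncomputable def psiC (h : ℕ) (η : Fin h → ℝ) : Polynomial ℂ :=
  X ^ h + ∑ e ∈ Finset.range h, C ((etaRev h η e : ℝ) : ℂ) * X ^ e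

/-- smoothing polynomial -/
noncomputable def Gpoly (T : ℕ) (μ : ℂ) : Polynomial ℂ :=
  C ((T : ℂ))⁻¹ * ∑ t ∈ Finset.range T, C (μ ^ (T - 1 - t)) * X ^ t

noncomputable def Dpoly (T : ℕ) (μ : ℂ) : Polynomial ℂ :=
  X ^ T - C μ * Gpoly T μ

section basic
variable (h : ℕ) (η : Fin h → ℝ)

lemma etaRev_lt {e : ℕ} (he : e < h) : etaRev h η e = η ⟨h - 1 - e, by omega⟩ := dif_pos he

lemma eta_eq_etaRev (l : Fin h) : η l = etaRev h η (h - 1 - (l : ℕ)) := by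
  have hl := l.isLt
  rw [etaRev_lt h η (by omega)]
  congr 1
  apply Fin.ext
  simp only [Fin.val_mk]
  omega

/-- reflection of a Fin-indexed η-sum into an etaRev-indexed range sum (ℂ version). -/
lemma sum_fin_eta_complex (f : ℕ → ℂ) :
    ∑ l : Fin h, (η l : ℂ) * f (h - 1 - (l : ℕ)) =
      ∑ e ∈ Finset.range h, ((etaRev h η e : ℝ) : ℂ) * f e := by
  have h1 : ∑ l : Fin h, (η l : ℂ) * f (h - 1 - (l : ℕ)) =
      ∑ e ∈ Finset.range h, ((etaRev h η (h - 1 - e) : ℝ) : ℂ) * f (h - 1 - e) := by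
    rw [← Fin.sum_univ_eq_sum_range (fun e => ((etaRev h η (h - 1 - e) : ℝ) : ℂ) * f (h - 1 - e)) h]
    exact Finset.sum_congr rfl fun l _ => by rw [← eta_eq_etaRev]
  rw [h1, Finset.sum_range_reflect (fun e => ((etaRev h η e : ℝ) : ℂ) * f e) h]

lemma psiC_sum_degree_lt (hh : 1 ≤ h) :
    (∑ e ∈ Finset.range h, C ((etaRev h η e : ℝ) : ℂ) * X ^ e).degree < (h : WithBot ℕ) := by
  apply lt_of_le_of_lt (Polynomial.degree_sum_le _ _)
  rw [Finset.sup_lt_iff (by exact_mod_cast WithBot.bot_lt_coe h)]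
  intro e he
  apply lt_of_le_of_lt (Polynomial.degree_C_mul_X_pow_le e _)
  exact_mod_cast Finset.mem_range.mp he

lemma psiC_monic (hh : 1 ≤ h) : (psiC h η).Monic :=
  Polynomial.monic_X_pow_add (psiC_sum_degree_lt h η hh)

lemma psiC_natDegree (hh : 1 ≤ h) : (psiC h η).natDegree = h := by
  have : (psiC h η).degree = h := by
    rw [psiC, Polynomial.degree_add_eq_left_of_degree_lt]
    · exact Polynomial.degree_X_pow h
    · rw [Polynomial.degree_X_pow]; exact psiC_sum_degree_lt h η hh
  rw [Polynomial.natDegree, this]; rfl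

lemma psiC_coeff_lt {a : ℕ} (ha : a < h) :
    (psiC h η).coeff a = ((etaRev h η a : ℝ) : ℂ) := by
  rw [psiC, Polynomial.coeff_add, Polynomial.coeff_X_pow, if_neg (by omega),
    Polynomial.finset_sum_coeff]
  rw [Finset.sum_eq_single a]
  · simp
  · intro b _ hba
    rw [Polynomial.coeff_C_mul, Polynomial.coeff_X_pow, if_neg (fun hc => hba hc.symm), mul_zero]
  · intro hnot; exact absurd (Finset.mem_range.mpr ha) hnot

lemma psiC_coeff_h : (psiC h η).coeff h = 1 := by
  rw [psiC, Polynomial.coeff_add, Polynomial.coeff_X_pow, if_pos rfl, Polynomial.finset_sum_coeff]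
  rw [Finset.sum_eq_zero, add_zero]
  intro b hb
  rw [Polynomial.coeff_C_mul, Polynomial.coeff_X_pow, if_neg (by have := Finset.mem_range.mp hb; omega),
    mul_zero]

end basic

section roots
variable (h : ℕ) (η : Fin h → ℝ)

lemma psiC_roots_abs_le (hh : 1 ≤ h)
    (hroots : ∀ z : ℂ,
      (1 : ℂ) + ∑ l : Fin h, (η l : ℂ) * z ^ ((l : ℕ) + 1) = 0 → 1 ≤ ‖z‖) :
    ∀ μ ∈ (psiC h η).roots, ‖μ‖ ≤ 1 := by
  intro μ hμ
  have hroot : (psiC h η).eval μ = 0 := (Polynomial.isRoot_of_mem_roots hμ)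
  have heval : (psiC h η).eval μ = μ ^ h + ∑ e ∈ Finset.range h, ((etaRev h η e : ℝ) : ℂ) * μ ^ e := by
    simp [psiC, Polynomial.eval_finset_sum]
  by_cases h0 : μ = 0
  · simp [h0]
  · -- key factorization
    have hkey : μ ^ h * ((1 : ℂ) + ∑ l : Fin h, (η l : ℂ) * (μ⁻¹) ^ ((l : ℕ) + 1))
        = (psiC h η).eval μ := by
      rw [heval, mul_add, mul_one, Finset.mul_sum]
      congr 1
      have : ∀ l : Fin h, μ ^ h * ((η l : ℂ) * (μ⁻¹) ^ ((l : ℕ) + 1))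
          = (η l : ℂ) * μ ^ (h - 1 - (l : ℕ)) := by
        intro l
        have hl := l.isLt
        have hpow : μ ^ (h - 1 - (l : ℕ)) * μ ^ ((l : ℕ) + 1) = μ ^ h := by
          rw [← pow_add]; congr 1; omega
        have hne : μ ^ ((l:ℕ)+1) ≠ 0 := pow_ne_zero _ h0
        rw [← hpow, inv_pow, mul_mul_mul_comm, mul_inv_cancel₀ hne, mul_one, mul_comm]
      rw [Finset.sum_congr rfl fun l _ => this l]
      exact sum_fin_eta_complex h η (fun e => μ ^ e)
    have hfac : (1 : ℂ) + ∑ l : Fin h, (η l : ℂ) * (μ⁻¹) ^ ((l : ℕ) + 1) = 0 := by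
      have hμh : μ ^ h ≠ 0 := pow_ne_zero _ h0
      have := hkey.trans hroot
      exact (mul_eq_zero.mp this).resolve_left hμh
    have h1 : 1 ≤ ‖μ⁻¹‖ := hroots _ hfac
    rw [norm_inv] at h1
    have habs : 0 < ‖μ‖ := norm_pos_iff.mpr h0
    by_contra hgt
    push_neg at hgt
    have : ‖μ‖⁻¹ < 1 := by
      rw [inv_lt_one_iff₀]; right; exact hgt
    linarith

end roots

section smoothing
variable {T : ℕ}

lemma Gpoly_eval (hT : 1 ≤ T) (μ : ℂ) : (Gpoly T μ).eval μ = μ ^ (T - 1) := by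
  rw [Gpoly, Polynomial.eval_mul, Polynomial.eval_C, Polynomial.eval_finset_sum]
  have : ∀ t ∈ Finset.range T, ((C (μ ^ (T - 1 - t)) * X ^ t).eval μ) = μ ^ (T - 1) := by
    intro t ht
    rw [Polynomial.eval_mul, Polynomial.eval_C, Polynomial.eval_pow, Polynomial.eval_X, ← pow_add]
    congr 1
    have := Finset.mem_range.mp ht; omega
  rw [Finset.sum_congr rfl this, Finset.sum_const, Finset.card_range, nsmul_eq_mul]
  have hT0 : ((T : ℂ)) ≠ 0 := Nat.cast_ne_zero.mpr (by omega)
  field_simp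

lemma Dpoly_root (hT : 1 ≤ T) (μ : ℂ) : (X - C μ) ∣ Dpoly T μ := by
  rw [Polynomial.dvd_iff_isRoot]
  unfold Polynomial.IsRoot Dpoly
  rw [Polynomial.eval_sub, Polynomial.eval_mul, Polynomial.eval_C, Polynomial.eval_pow,
    Polynomial.eval_X, Gpoly_eval hT]
  rw [show μ * μ ^ (T - 1) = μ ^ T by rw [mul_comm, ← pow_succ]; congr 1; omega]
  ring

lemma CG_degree_lt (μ : ℂ) : (C μ * Gpoly T μ).degree < (T : WithBot ℕ) := by
  have hsum : (∑ t ∈ Finset.range T, C (μ ^ (T - 1 - t)) * X ^ t).degree < (T : WithBot ℕ) := by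
    apply lt_of_le_of_lt (Polynomial.degree_sum_le _ _)
    rw [Finset.sup_lt_iff (by exact_mod_cast WithBot.bot_lt_coe T)]
    intro t ht
    apply lt_of_le_of_lt (Polynomial.degree_C_mul_X_pow_le t _)
    exact_mod_cast Finset.mem_range.mp ht
  calc (C μ * Gpoly T μ).degree ≤ (C μ).degree + (Gpoly T μ).degree := Polynomial.degree_mul_le _ _
    _ ≤ 0 + (Gpoly T μ).degree := add_le_add Polynomial.degree_C_le le_rfl
    _ = (Gpoly T μ).degree := zero_add _
    _ ≤ (C ((T:ℂ))⁻¹).degree + (∑ t ∈ Finset.range T, C (μ ^ (T - 1 - t)) * X ^ t).degree :=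
        Polynomial.degree_mul_le _ _
    _ ≤ 0 + (∑ t ∈ Finset.range T, C (μ ^ (T - 1 - t)) * X ^ t).degree :=
        add_le_add Polynomial.degree_C_le le_rfl
    _ = _ := zero_add _
    _ < (T : WithBot ℕ) := hsum

lemma Dpoly_monic (μ : ℂ) : (Dpoly T μ).Monic :=
  Polynomial.monic_X_pow_sub (CG_degree_lt μ)

lemma Dpoly_natDegree (μ : ℂ) : (Dpoly T μ).natDegree = T :=
  Polynomial.natDegree_eq_of_degree_eq_some (by
    rw [Dpoly, Polynomial.degree_sub_eq_left_of_degree_lt]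
    · exact Polynomial.degree_X_pow T
    · rw [Polynomial.degree_X_pow]; exact CG_degree_lt μ)

lemma Gpoly_mul (μ : ℂ) (P : Polynomial ℂ) :
    Gpoly T μ * P = ∑ t ∈ Finset.range T, C ((T : ℂ)⁻¹ * μ ^ (T - 1 - t)) * (P * X ^ t) := by
  rw [Gpoly, Finset.mul_sum, Finset.sum_mul]
  refine Finset.sum_congr rfl fun t _ => ?_
  rw [_root_.map_mul]; ring

/-- the key inductive coefficient bound -/
lemma prod_coeff_bound (hT : 1 ≤ T) (s : Multiset ℂ) (hs : ∀ μ ∈ s, ‖μ‖ ≤ 1) :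
    ((s.map (Dpoly T)).prod).Monic ∧ ((s.map (Dpoly T)).prod).natDegree = s.card * T ∧
    ∀ m : ℕ, ‖((s.map (Dpoly T)).prod).coeff m‖ ≤
      ((2:ℝ) ^ s.card - 1) / T + (if m = s.card * T then 1 else 0) := by
  induction s using Multiset.induction_on with
  | empty =>
    refine ⟨by simpa using Polynomial.monic_one, by simp, ?_⟩
    intro m
    simp only [Multiset.map_zero, Multiset.prod_zero, Polynomial.coeff_one, Multiset.card_zero,
      zero_mul, pow_zero]
    by_cases hm : m = 0
    · simp [hm]
    · simp [hm]
  | cons μ s ih =>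
    obtain ⟨ihM, ihD, ihC⟩ := ih (fun μ' hμ' => hs μ' (Multiset.mem_cons_of_mem hμ'))
    have hμ1 : ‖μ‖ ≤ 1 := hs μ (Multiset.mem_cons_self μ s)
    set P := (s.map (Dpoly T)).prod with hP
    set c := s.card with hc
    have hT0 : (0:ℝ) < T := by exact_mod_cast (by omega : 0 < T)
    have hMon : ((Multiset.map (Dpoly T) (μ ::ₘ s)).prod).Monic := by
      rw [Multiset.map_cons, Multiset.prod_cons]
      exact (Dpoly_monic μ).mul ihM
    have hDeg : ((Multiset.map (Dpoly T) (μ ::ₘ s)).prod).natDegree = (μ ::ₘ s).card * T := by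
      rw [Multiset.map_cons, Multiset.prod_cons, (Dpoly_monic μ).natDegree_mul ihM,
        Dpoly_natDegree, ihD, Multiset.card_cons]
      ring
    refine ⟨hMon, hDeg, ?_⟩
    intro m
    rw [Multiset.map_cons, Multiset.prod_cons, Multiset.card_cons,
      show (Multiset.card s + 1) * T = Multiset.card s * T + T by ring]
    -- bound helper: coefficients of P including the leading one
    have hPC : ∀ j : ℕ, ‖P.coeff j‖ ≤ ((2:ℝ) ^ c - 1) / T + (if j = c * T then 1 else 0) := ihC
    -- expand D * P
    have hexp : Dpoly T μ * P = P * X ^ T - C μ * (Gpoly T μ * P) := by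
      rw [Dpoly]; ring
    rw [hexp, Polynomial.coeff_sub, Polynomial.coeff_mul_X_pow', Polynomial.coeff_C_mul]
    set B : ℝ := ((2:ℝ) ^ c - 1) / T with hB
    have hBnn : 0 ≤ B := by
      apply div_nonneg _ (le_of_lt hT0)
      have : (1:ℝ) ≤ 2 ^ c := one_le_pow₀ (by norm_num)
      linarith
    -- first piece
    have h1 : ‖if T ≤ m then P.coeff (m - T) else 0‖ ≤ B + (if m = c * T + T then 1 else 0) := by
      by_cases hTm : T ≤ m
      · rw [if_pos hTm]
        refine le_trans (hPC (m - T)) ?_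
        have hiff : (m - T = c * T) ↔ (m = c * T + T) := by omega
        by_cases hmt : m - T = c * T
        · rw [if_pos hmt, if_pos (hiff.mp hmt)]
        · rw [if_neg hmt, if_neg (fun hx => hmt (hiff.mpr hx))]
      · rw [if_neg hTm]
        simp only [norm_zero]
        have : (0:ℝ) ≤ if m = c * T + T then 1 else 0 := by positivity
        linarith
    -- second piece
    have h2 : ‖μ * (Gpoly T μ * P).coeff m‖ ≤ B + 1 / T := by
      have hGPc : (Gpoly T μ * P).coeff m
          = ∑ t ∈ Finset.range T, ((T : ℂ)⁻¹ * μ ^ (T - 1 - t)) *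
              (if t ≤ m then P.coeff (m - t) else 0) := by
        rw [Gpoly_mul]
        rw [Polynomial.finset_sum_coeff]
        refine Finset.sum_congr rfl fun t _ => ?_
        rw [Polynomial.coeff_C_mul, Polynomial.coeff_mul_X_pow']
      rw [norm_mul, hGPc]
      have hstep : ‖∑ t ∈ Finset.range T, ((T : ℂ)⁻¹ * μ ^ (T - 1 - t)) *
              (if t ≤ m then P.coeff (m - t) else 0)‖ ≤ B + 1 / T := by
        refine le_trans (norm_sum_le _ _) ?_
        have hterm : ∀ t ∈ Finset.range T,
            ‖((T : ℂ)⁻¹ * μ ^ (T - 1 - t)) * (if t ≤ m then P.coeff (m - t) else 0)‖ ≤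
            (1/T) * (B + (if t ≤ m ∧ m - t = c * T then 1 else 0)) := by
          intro t _
          rw [norm_mul, norm_mul]
          have hn1 : ‖((T:ℂ))⁻¹‖ = 1 / T := by
            rw [norm_inv, Complex.norm_natCast]
            exact (one_div _).symm
          have hn2 : ‖μ ^ (T - 1 - t)‖ ≤ 1 := by
            rw [norm_pow]
            apply pow_le_one₀ (norm_nonneg μ)
            exact hμ1
          have hn3 : ‖if t ≤ m then P.coeff (m - t) else 0‖ ≤
              B + (if t ≤ m ∧ m - t = c * T then 1 else 0) := by
            by_cases htm : t ≤ m
            · rw [if_pos htm]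
              refine le_trans (hPC (m - t)) ?_
              by_cases hx : m - t = c * T
              · rw [if_pos hx, if_pos ⟨htm, hx⟩]
              · rw [if_neg hx, if_neg (fun hc' => hx hc'.2)]
            · rw [if_neg htm]
              simp only [norm_zero]
              have : (0:ℝ) ≤ if t ≤ m ∧ m - t = c * T then 1 else 0 := by positivity
              linarith
          calc ‖((T:ℂ))⁻¹‖ * ‖μ ^ (T - 1 - t)‖ * ‖if t ≤ m then P.coeff (m - t) else 0‖
              ≤ (1/T) * 1 * (B + (if t ≤ m ∧ m - t = c * T then 1 else 0)) := by
                apply mul_le_mul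
                · rw [hn1]
                  exact mul_le_mul_of_nonneg_left hn2 (div_nonneg zero_le_one hT0.le)
                · exact hn3
                · exact norm_nonneg _
                · exact mul_nonneg (div_nonneg zero_le_one hT0.le) zero_le_one
            _ = (1/T) * (B + (if t ≤ m ∧ m - t = c * T then 1 else 0)) := by ring
        refine le_trans (Finset.sum_le_sum hterm) ?_
        rw [← Finset.mul_sum]
        have hsum2 : ∑ t ∈ Finset.range T, (B + (if t ≤ m ∧ m - t = c * T then 1 else 0))
            = T * B + ∑ t ∈ Finset.range T, (if t ≤ m ∧ m - t = c * T then (1:ℝ) else 0) := by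
          rw [Finset.sum_add_distrib, Finset.sum_const, Finset.card_range, nsmul_eq_mul]
        have hind : ∑ t ∈ Finset.range T, (if t ≤ m ∧ m - t = c * T then (1:ℝ) else 0) ≤ 1 := by
          classical
          rw [Finset.sum_boole]
          have hsub : (Finset.range T).filter (fun t => t ≤ m ∧ m - t = c * T) ⊆ {m - c * T} := by
            intro t ht
            simp only [Finset.mem_filter, Finset.mem_range] at ht
            simp only [Finset.mem_singleton]
            omega
          have hcard := Finset.card_le_card hsub
          simp only [Finset.card_singleton] at hcard
          exact_mod_cast hcard
        calc (1/(T:ℝ)) * ∑ t ∈ Finset.range T, (B + (if t ≤ m ∧ m - t = c * T then 1 else 0))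
            = (1/T) * ((T:ℝ) * B + ∑ t ∈ Finset.range T, (if t ≤ m ∧ m - t = c * T then (1:ℝ) else 0)) := by
              rw [hsum2]
          _ ≤ (1/T) * ((T:ℝ) * B + 1) := by
              apply mul_le_mul_of_nonneg_left _ (by positivity)
              linarith
          _ = B + 1/T := by field_simp
      calc ‖μ‖ * ‖∑ t ∈ Finset.range T, ((T : ℂ)⁻¹ * μ ^ (T - 1 - t)) *
              (if t ≤ m then P.coeff (m - t) else 0)‖
          ≤ 1 * (B + 1/T) := by
            apply mul_le_mul _ hstep (norm_nonneg _) (by norm_num)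
            exact hμ1
        _ = B + 1/T := one_mul _
    calc ‖(if T ≤ m then P.coeff (m - T) else 0) - μ * (Gpoly T μ * P).coeff m‖
        ≤ ‖if T ≤ m then P.coeff (m - T) else 0‖ + ‖μ * (Gpoly T μ * P).coeff m‖ :=
          norm_sub_le _ _
      _ ≤ (B + (if m = c * T + T then 1 else 0)) + (B + 1/T) := add_le_add h1 h2
      _ = ((2:ℝ) ^ (c+1) - 1) / T + (if m = c * T + T then 1 else 0) := by
          rw [hB]
          field_simp
          ring

lemma prodmap_dvd (s : Multiset ℂ) (F G : ℂ → Polynomial ℂ) (hFG : ∀ a ∈ s, F a ∣ G a) :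
    (s.map F).prod ∣ (s.map G).prod := by
  induction s using Multiset.induction_on with
  | empty => simp
  | cons a s ih =>
    simp only [Multiset.map_cons, Multiset.prod_cons]
    exact mul_dvd_mul (hFG a (Multiset.mem_cons_self a s))
      (ih fun b hb => hFG b (Multiset.mem_cons_of_mem hb))

end smoothing

section pairing
variable (h : ℕ) (η : Fin h → ℝ)

/-- The pairing of a polynomial multiple of ψ against a solution window vanishes. -/
lemma pairing_zero (hh : 1 ≤ h) {N : ℕ} (hN : h + 1 ≤ N) (f : ℕ → ℝ)
    (hf : ∀ s : ℕ, s + h ≤ N - 1 →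
      f (s + h) + ∑ e ∈ Finset.range h, etaRev h η e * f (s + e) = 0)
    (p : Polynomial ℂ) (hdvd : psiC h η ∣ p) (hdeg : p.natDegree ≤ N - 1) :
    ∑ j ∈ Finset.range N, p.coeff j * ((f j : ℝ) : ℂ) = 0 := by
  obtain ⟨Q, rfl⟩ := hdvd
  rcases eq_or_ne Q 0 with rfl | hQ0
  · simp
  -- inner vanishing for monomial multiples
  have inner : ∀ s : ℕ, s ≤ N - 1 - h →
      ∑ j ∈ Finset.range N, (psiC h η * X ^ s).coeff j * ((f j : ℝ) : ℂ) = 0 := by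
    intro s hs
    have hstep1 : ∑ j ∈ Finset.range N, (psiC h η * X ^ s).coeff j * ((f j : ℝ) : ℂ)
        = ∑ j ∈ Finset.Ico s N, (psiC h η).coeff (j - s) * ((f j : ℝ) : ℂ) := by
      simp only [Polynomial.coeff_mul_X_pow']
      rw [← Finset.sum_subset (show Finset.Ico s N ⊆ Finset.range N by
        intro x hx; simp only [Finset.mem_Ico] at hx; exact Finset.mem_range.mpr hx.2)]
      · refine Finset.sum_congr rfl fun j hj => ?_
        rw [if_pos (Finset.mem_Ico.mp hj).1]
      · intro j hj hj2
        rw [if_neg, zero_mul]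
        intro hsj
        exact hj2 (Finset.mem_Ico.mpr ⟨hsj, Finset.mem_range.mp hj⟩)
    have hstep2 : ∑ j ∈ Finset.Ico s N, (psiC h η).coeff (j - s) * ((f j : ℝ) : ℂ)
        = ∑ d ∈ Finset.range (N - s), (psiC h η).coeff d * ((f (s + d) : ℝ) : ℂ) := by
      rw [Finset.sum_Ico_eq_sum_range]
      refine Finset.sum_congr rfl fun d _ => ?_
      congr 2
      omega
    have hstep3 : ∑ d ∈ Finset.range (N - s), (psiC h η).coeff d * ((f (s + d) : ℝ) : ℂ)
        = ∑ d ∈ Finset.range (h + 1), (psiC h η).coeff d * ((f (s + d) : ℝ) : ℂ) := by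
      rw [← Finset.sum_subset (show Finset.range (h+1) ⊆ Finset.range (N - s) by
        apply Finset.range_subset_range.mpr; omega)]
      intro d hd hd2
      rw [Polynomial.coeff_eq_zero_of_natDegree_lt, zero_mul]
      rw [psiC_natDegree h η hh]
      simp only [Finset.mem_range] at hd2
      omega
    rw [hstep1, hstep2, hstep3, Finset.sum_range_succ, psiC_coeff_h]
    have hcoeffs : ∀ d ∈ Finset.range h,
        (psiC h η).coeff d * ((f (s + d) : ℝ) : ℂ)
          = ((etaRev h η d : ℝ) : ℂ) * ((f (s + d) : ℝ) : ℂ) := by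
      intro d hd
      rw [psiC_coeff_lt h η (Finset.mem_range.mp hd)]
    rw [Finset.sum_congr rfl hcoeffs, one_mul]
    have h0 := hf s (by omega)
    have h0c : ((f (s + h) + ∑ e ∈ Finset.range h, etaRev h η e * f (s + e) : ℝ) : ℂ) = 0 := by
      rw [h0]; norm_num
    push_cast at h0c
    linear_combination h0c
  -- decomposition of Q
  have hQdeg : Q.natDegree < N - h := by
    have hψ0 : psiC h η ≠ 0 := (psiC_monic h η hh).ne_zero
    have := Polynomial.natDegree_mul hψ0 hQ0
    rw [psiC_natDegree h η hh] at this
    omega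
  have hQrep : psiC h η * Q
      = ∑ s ∈ Finset.range (N - h), Polynomial.C (Q.coeff s) * (psiC h η * X ^ s) := by
    conv_lhs => rw [Q.as_sum_range' (N - h) hQdeg]
    rw [Finset.mul_sum]
    refine Finset.sum_congr rfl fun s _ => ?_
    rw [← Polynomial.C_mul_X_pow_eq_monomial]
    ring
  rw [hQrep]
  have hswap : ∑ j ∈ Finset.range N,
      (∑ s ∈ Finset.range (N - h), Polynomial.C (Q.coeff s) * (psiC h η * X ^ s)).coeff j
        * ((f j : ℝ) : ℂ)
      = ∑ s ∈ Finset.range (N - h), Q.coeff s *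
          (∑ j ∈ Finset.range N, (psiC h η * X ^ s).coeff j * ((f j : ℝ) : ℂ)) := by
    simp only [Polynomial.finset_sum_coeff, Polynomial.coeff_C_mul, Finset.sum_mul,
      Finset.mul_sum]
    rw [Finset.sum_comm]
    refine Finset.sum_congr rfl fun s _ => Finset.sum_congr rfl fun j _ => by ring
  rw [hswap]
  apply Finset.sum_eq_zero
  intro s hs
  rw [inner s (by have := Finset.mem_range.mp hs; omega), mul_zero]

end pairing

section mainbound
variable (h : ℕ) (η : Fin h → ℝ)

/-- The key analytic bound: for a window of length `N`, any real solution of the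
recurrence satisfies `f(N-1)² ≤ (C/N)·∑_{j<N} f(j)²`. -/
lemma main_bound (hh : 1 ≤ h)
    (hroots' : ∀ μ ∈ (psiC h η).roots, ‖μ‖ ≤ 1)
    {N : ℕ} (hN : 4 * h + 4 ≤ N) (f : ℕ → ℝ)
    (hf : ∀ s : ℕ, s + h ≤ N - 1 →
      f (s + h) + ∑ e ∈ Finset.range h, etaRev h η e * f (s + e) = 0) :
    (f (N - 1)) ^ 2 ≤ (8 * (h:ℝ)^2 * 4 ^ h / N) * ∑ j ∈ Finset.range N, (f j) ^ 2 := by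
  classical
  set T := (N - 1) / h with hTdef
  have hdm := Nat.div_add_mod (N - 1) h
  have hmod : (N - 1) % h < h := Nat.mod_lt _ (by omega)
  have hhT : h * T + (N-1) % h = N - 1 := hdm
  have hT1 : 1 ≤ T := (Nat.one_le_div_iff (by omega)).mpr (by omega)
  have hTle : h * T ≤ N - 1 := by omega
  have hTge : N - h ≤ h * T := by omega
  -- roots
  have hsp : (psiC h η).Splits := IsAlgClosed.splits _
  have hcard : (psiC h η).roots.card = h := by
    rw [Polynomial.splits_iff_card_roots.mp hsp, psiC_natDegree h η hh]
  have hprod : psiC h η = ((psiC h η).roots.map fun μ => X - C μ).prod :=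
    hsp.eq_prod_roots_of_monic (psiC_monic h η hh)
  -- the smoothed product
  set W := (((psiC h η).roots).map (Dpoly T)).prod with hW
  obtain ⟨hWmon, hWdeg, hWcoeff⟩ := prod_coeff_bound hT1 (psiC h η).roots hroots'
  rw [hcard] at hWdeg hWcoeff
  have hdvdW : psiC h η ∣ W := by
    rw [hprod]
    exact prodmap_dvd _ _ _ fun μ _ => Dpoly_root hT1 μ
  -- remainder polynomial
  set rt : Polynomial ℂ := X ^ (h * T) - W with hrt
  have hrtcoeff : ∀ m : ℕ, ‖rt.coeff m‖ ≤ (if m < h * T then ((2:ℝ) ^ h - 1) / T else 0) := by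
    intro m
    rcases lt_trichotomy m (h * T) with hm | hm | hm
    · rw [if_pos hm, hrt, Polynomial.coeff_sub, Polynomial.coeff_X_pow, if_neg (by omega),
        zero_sub, norm_neg]
      have := hWcoeff m
      rw [if_neg (by omega)] at this
      linarith
    · rw [if_neg (by omega), hrt, Polynomial.coeff_sub, Polynomial.coeff_X_pow, if_pos hm]
      have : W.coeff m = 1 := by
        rw [hm, ← hWdeg]
        exact hWmon.coeff_natDegree
      rw [this]
      simp
    · rw [if_neg (by omega), hrt, Polynomial.coeff_sub, Polynomial.coeff_X_pow, if_neg (by omega),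
        Polynomial.coeff_eq_zero_of_natDegree_lt (by rw [hWdeg]; omega)]
      simp
  have hrtdeg : rt.natDegree ≤ h * T :=
    le_trans (Polynomial.natDegree_sub_le _ _) (by
      simp [Polynomial.natDegree_X_pow, hW, hWdeg])
  -- p := rt * X^(N-1-hT)
  set p : Polynomial ℂ := rt * X ^ (N - 1 - h * T) with hp
  have hpdeg : p.natDegree ≤ N - 1 := by
    refine le_trans (Polynomial.natDegree_mul_le) ?_
    rw [Polynomial.natDegree_X_pow]
    omega
  have hCdvd : psiC h η ∣ X ^ (N - 1) - p := by
    have hidW : X ^ (N - 1) - p = X ^ (N - 1 - h * T) * W := by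
      have hWe : W = X ^ (h * T) - rt := by rw [hrt]; ring
      rw [hWe, mul_sub, ← pow_add, hp]
      rw [show N - 1 - h * T + h * T = N - 1 by omega]
      ring
    rw [hidW]
    exact Dvd.dvd.mul_left hdvdW _
  have hCdeg : (X ^ (N - 1) - p : Polynomial ℂ).natDegree ≤ N - 1 :=
    le_trans (Polynomial.natDegree_sub_le _ _) (by
      simp only [Polynomial.natDegree_X_pow]
      exact max_le le_rfl hpdeg)
  -- pairing
  have hpair := pairing_zero h η hh (by omega : h + 1 ≤ N) f hf _ hCdvd hCdeg
  have hrep : ((f (N - 1) : ℝ) : ℂ) = ∑ j ∈ Finset.range N, p.coeff j * ((f j : ℝ) : ℂ) := by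
    have hsplit : ∑ j ∈ Finset.range N, ((X ^ (N-1) - p : Polynomial ℂ)).coeff j * ((f j : ℝ) : ℂ)
        = (∑ j ∈ Finset.range N, ((X:Polynomial ℂ) ^ (N-1)).coeff j * ((f j : ℝ) : ℂ))
          - ∑ j ∈ Finset.range N, p.coeff j * ((f j : ℝ) : ℂ) := by
      rw [← Finset.sum_sub_distrib]
      refine Finset.sum_congr rfl fun j _ => ?_
      rw [Polynomial.coeff_sub]
      ring
    have hXsum : ∑ j ∈ Finset.range N, ((X:Polynomial ℂ) ^ (N-1)).coeff j * ((f j : ℝ) : ℂ)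
        = ((f (N - 1) : ℝ) : ℂ) := by
      simp only [Polynomial.coeff_X_pow]
      have : ∀ j ∈ Finset.range N, (if j = N - 1 then (1:ℂ) else 0) * ((f j : ℝ) : ℂ)
          = (if j = N - 1 then ((f j : ℝ) : ℂ) else 0) := by
        intro j _
        split_ifs <;> simp
      rw [Finset.sum_congr rfl this, Finset.sum_ite_eq' (Finset.range N) (N-1)
        (fun j => ((f j : ℝ) : ℂ)), if_pos (Finset.mem_range.mpr (by omega))]
    rw [hsplit, hXsum] at hpair
    exact sub_eq_zero.mp hpair
  -- take real parts
  have hrepR : f (N - 1) = ∑ j ∈ Finset.range N, (p.coeff j).re * f j := by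
    have := congrArg Complex.re hrep
    rw [Complex.ofReal_re, Complex.re_sum] at this
    rw [this]
    refine Finset.sum_congr rfl fun j _ => ?_
    rw [Complex.mul_re, Complex.ofReal_re, Complex.ofReal_im, mul_zero, sub_zero]
  -- Cauchy-Schwarz
  have hCS : (f (N - 1)) ^ 2 ≤
      (∑ j ∈ Finset.range N, ((p.coeff j).re) ^ 2) * ∑ j ∈ Finset.range N, (f j) ^ 2 := by
    rw [hrepR]
    exact Finset.sum_mul_sq_le_sq_mul_sq _ _ _
  -- bound the coefficient mass
  have hT0 : (0:ℝ) < T := by exact_mod_cast (by omega : 0 < T)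
  have hN0 : (0:ℝ) < N := by exact_mod_cast (by omega : 0 < N)
  set B : ℝ := ((2:ℝ) ^ h - 1) / T with hB
  have hBnn : 0 ≤ B := by
    apply div_nonneg _ hT0.le
    have : (1:ℝ) ≤ 2 ^ h := one_le_pow₀ (by norm_num)
    linarith
  have hmass : ∑ j ∈ Finset.range N, ((p.coeff j).re) ^ 2 ≤ (h * T) * B ^ 2 := by
    have hterm : ∀ j ∈ Finset.range N, ((p.coeff j).re) ^ 2
        ≤ (if N - 1 - h * T ≤ j ∧ j - (N - 1 - h * T) < h * T then B ^ 2 else 0) := by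
      intro j _
      have hre : ((p.coeff j).re) ^ 2 ≤ ‖p.coeff j‖ ^ 2 := by
        rw [Complex.sq_norm, Complex.normSq_apply]
        nlinarith [sq_nonneg (p.coeff j).im]
      have hcz : p.coeff j = if N - 1 - h * T ≤ j then rt.coeff (j - (N - 1 - h * T)) else 0 := by
        rw [hp, Polynomial.coeff_mul_X_pow']
      by_cases hj1 : N - 1 - h * T ≤ j
      · by_cases hj2 : j - (N - 1 - h * T) < h * T
        · rw [if_pos ⟨hj1, hj2⟩]
          refine le_trans hre ?_
          rw [hcz, if_pos hj1]
          have := hrtcoeff (j - (N - 1 - h * T))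
          rw [if_pos hj2] at this
          have hnn : (0:ℝ) ≤ ‖rt.coeff (j - (N - 1 - h * T))‖ := norm_nonneg _
          nlinarith
        · rw [if_neg (fun hx => hj2 hx.2)]
          have : rt.coeff (j - (N - 1 - h * T)) = 0 := by
            have := hrtcoeff (j - (N - 1 - h * T))
            rw [if_neg hj2] at this
            have hnn : (0:ℝ) ≤ ‖rt.coeff (j - (N - 1 - h * T))‖ := norm_nonneg _
            have : ‖rt.coeff (j - (N - 1 - h * T))‖ = 0 := le_antisymm this hnn
            exact norm_eq_zero.mp this
          rw [hcz, if_pos hj1, this]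
          simp
      · rw [if_neg (fun hx => hj1 hx.1), hcz, if_neg hj1]
        simp
    refine le_trans (Finset.sum_le_sum hterm) ?_
    rw [Finset.sum_ite, Finset.sum_const, Finset.sum_const_zero, add_zero, nsmul_eq_mul]
    have hsub : (Finset.range N).filter
        (fun j => N - 1 - h * T ≤ j ∧ j - (N - 1 - h * T) < h * T)
        ⊆ Finset.Ico (N - 1 - h * T) (N - 1 - h * T + h * T) := by
      intro j hj
      simp only [Finset.mem_filter, Finset.mem_range] at hj
      simp only [Finset.mem_Ico]
      omega
    have hc1 := Finset.card_le_card hsub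
    rw [Nat.card_Ico] at hc1
    have hc2 : ((Finset.range N).filter
        (fun j => N - 1 - h * T ≤ j ∧ j - (N - 1 - h * T) < h * T)).card ≤ h * T := by omega
    have hB2 : (0:ℝ) ≤ B ^ 2 := sq_nonneg _
    calc (((Finset.range N).filter
        (fun j => N - 1 - h * T ≤ j ∧ j - (N - 1 - h * T) < h * T)).card : ℝ) * B ^ 2
        ≤ ((h * T : ℕ) : ℝ) * B ^ 2 := by
          apply mul_le_mul_of_nonneg_right _ hB2
          exact_mod_cast hc2
      _ = (h * T) * B ^ 2 := by push_cast; ring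
  -- final arithmetic
  have harith : ((h:ℝ) * T) * B ^ 2 ≤ 8 * (h:ℝ)^2 * 4 ^ h / N := by
    have h2h : ((2:ℝ) ^ h - 1) ^ 2 ≤ 4 ^ h := by
      have h1 : (1:ℝ) ≤ 2 ^ h := one_le_pow₀ (by norm_num)
      have h2 : ((2:ℝ) ^ h) ^ 2 = 4 ^ h := by
        rw [← pow_mul, mul_comm, pow_mul]
        norm_num
      nlinarith
    have hstep1 : ((h:ℝ) * T) * B ^ 2 = (h:ℝ) * ((2:ℝ) ^ h - 1) ^ 2 / T := by
      rw [hB]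
      field_simp
    rw [hstep1]
    have hNle : (N:ℝ) ≤ 8 * (h:ℝ) * T := by
      have hx : N ≤ 8 * (h * T) := by omega
      have hx2 := (Nat.cast_le (α := ℝ)).mpr hx
      push_cast at hx2
      linarith
    rw [div_le_div_iff₀ hT0 hN0]
    have h4h : (0:ℝ) < 4 ^ h := by positivity
    have hh0 : (0:ℝ) < h := by exact_mod_cast (by omega : 0 < h)
    calc (h:ℝ) * ((2:ℝ) ^ h - 1) ^ 2 * N
        ≤ (h:ℝ) * 4 ^ h * N := by
          apply mul_le_mul_of_nonneg_right _ hN0.le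
          exact mul_le_mul_of_nonneg_left h2h hh0.le
      _ ≤ (h:ℝ) * 4 ^ h * (8 * (h:ℝ) * T) := by
          apply mul_le_mul_of_nonneg_left hNle
          positivity
      _ = 8 * (h:ℝ) ^ 2 * 4 ^ h * T := by ring
  -- combine
  have hsq : (0:ℝ) ≤ ∑ j ∈ Finset.range N, (f j) ^ 2 :=
    Finset.sum_nonneg fun j _ => sq_nonneg _
  calc (f (N - 1)) ^ 2 ≤ (∑ j ∈ Finset.range N, ((p.coeff j).re) ^ 2)
        * ∑ j ∈ Finset.range N, (f j) ^ 2 := hCS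
    _ ≤ (8 * (h:ℝ)^2 * 4 ^ h / N) * ∑ j ∈ Finset.range N, (f j) ^ 2 := by
        apply mul_le_mul_of_nonneg_right _ hsq
        exact le_trans hmass harith

end mainbound

section geometry
open Matrix

noncomputable def padVec {k : ℕ} (v : Fin k → ℝ) (m : ℕ) : ℝ :=
  if hm : m < k then v ⟨m, hm⟩ else 0

variable (h : ℕ) (η : Fin h → ℝ) (k : ℕ)

lemma row_formula (hk : h + 1 ≤ k) (v : Fin k → ℝ) (i : Fin (k - h)) :
    (filterMatrix h η k *ᵥ v) i =
      padVec v (i : ℕ) + ∑ e ∈ Finset.range h, etaRev h η e * padVec v ((i : ℕ) + h - e) := by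
  classical
  have hik : (i : ℕ) + h + 1 ≤ k := by have := i.isLt; omega
  have hmv : (filterMatrix h η k *ᵥ v) i = ∑ j : Fin k, filterMatrix h η k i j * v j := by
    simp [Matrix.mulVec, dotProduct]
  rw [hmv]
  set Fn : ℕ → ℝ := fun jn =>
    if hj : jn < k then filterMatrix h η k i ⟨jn, hj⟩ * v ⟨jn, hj⟩ else 0 with hFn
  have h1 : ∑ j : Fin k, filterMatrix h η k i j * v j = ∑ jn ∈ Finset.range k, Fn jn := by
    rw [← Fin.sum_univ_eq_sum_range Fn k]
    refine Finset.sum_congr rfl fun j _ => ?_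
    rw [hFn]
    simp only [dif_pos j.isLt, Fin.eta]
  rw [h1]
  have h2 : ∑ jn ∈ Finset.range k, Fn jn = ∑ jn ∈ Finset.Ico (i : ℕ) ((i : ℕ) + h + 1), Fn jn := by
    rw [← Finset.sum_subset (show Finset.Ico (i : ℕ) ((i : ℕ) + h + 1) ⊆ Finset.range k by
      intro x hx
      simp only [Finset.mem_Ico] at hx
      exact Finset.mem_range.mpr (by omega))]
    intro jn hjn hjn2
    simp only [Finset.mem_range] at hjn
    simp only [Finset.mem_Ico, not_and, not_lt] at hjn2
    rw [hFn]
    simp only [dif_pos hjn]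
    have hz : filterMatrix h η k i ⟨jn, hjn⟩ = 0 := by
      have hcases : jn < (i : ℕ) ∨ (i : ℕ) + h + 1 ≤ jn := by
        by_cases hc : (i:ℕ) ≤ jn
        · right; exact hjn2 hc
        · left; omega
      rw [filterMatrix, Matrix.of_apply]
      rw [if_neg (by simp only [Fin.val_mk]; omega), dif_neg (by simp only [Fin.val_mk]; omega)]
    rw [hz, zero_mul]
  rw [h2, Finset.sum_Ico_eq_sum_range,
    show (i : ℕ) + h + 1 - (i : ℕ) = h + 1 by omega,
    Finset.sum_range_succ']
  have h3 : Fn ((i : ℕ) + 0) = padVec v (i : ℕ) := by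
    rw [hFn]
    simp only [add_zero, dif_pos (by omega : (i:ℕ) < k)]
    rw [filterMatrix, Matrix.of_apply, if_pos (by simp), one_mul, padVec,
      dif_pos (by omega : (i:ℕ) < k)]
  have h4 : ∑ d ∈ Finset.range h, Fn ((i : ℕ) + (d + 1))
      = ∑ e ∈ Finset.range h, etaRev h η e * padVec v ((i : ℕ) + h - e) := by
    have h5 : ∀ d ∈ Finset.range h, Fn ((i : ℕ) + (d + 1))
        = etaRev h η (h - 1 - d) * padVec v ((i : ℕ) + (d + 1)) := by
      intro d hd
      have hdh := Finset.mem_range.mp hd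
      rw [hFn]
      simp only [dif_pos (by omega : (i:ℕ) + (d+1) < k)]
      rw [filterMatrix, Matrix.of_apply]
      rw [if_neg (by simp only [Fin.val_mk]; omega),
        dif_pos (by simp only [Fin.val_mk]; exact ⟨by omega, by omega⟩)]
      rw [padVec, dif_pos (by omega : (i:ℕ) + (d+1) < k)]
      congr 1
      · rw [etaRev_lt h η (by omega)]
        congr 1
        apply Fin.ext
        simp only [Fin.val_mk]
        omega
    rw [Finset.sum_congr rfl h5]
    have h6 : ∀ d ∈ Finset.range h,
        etaRev h η (h - 1 - d) * padVec v ((i : ℕ) + (d + 1))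
        = (fun e => etaRev h η e * padVec v ((i : ℕ) + h - e)) (h - 1 - d) := by
      intro d hd
      have hdh := Finset.mem_range.mp hd
      simp only []
      congr 2
      omega
    rw [Finset.sum_congr rfl h6,
      Finset.sum_range_reflect (fun e => etaRev h η e * padVec v ((i : ℕ) + h - e)) h]
  rw [h3, h4, add_comm]

lemma kernel_rec (hk : h + 1 ≤ k) (v : Fin k → ℝ) (hv : filterMatrix h η k *ᵥ v = 0) :
    ∀ s : ℕ, s + h < k →
      padVec v (k - 1 - (s + h)) + ∑ e ∈ Finset.range h, etaRev h η e * padVec v (k - 1 - (s + e)) = 0 := by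
  intro s hs
  have hi : k - 1 - (s + h) < k - h := by omega
  have h0 : (filterMatrix h η k *ᵥ v) ⟨k - 1 - (s + h), hi⟩ = 0 := by rw [hv]; rfl
  rw [row_formula h η k hk v ⟨k - 1 - (s + h), hi⟩] at h0
  simp only [Fin.val_mk] at h0
  rw [← h0]
  congr 1
  refine Finset.sum_congr rfl fun e he => ?_
  have heh := Finset.mem_range.mp he
  congr 2
  omega

end geometry

section solution
open Matrix

noncomputable def sol (h : ℕ) (η : Fin h → ℝ) (a : Fin h → ℝ) : ℕ → ℝ
  | m =>
    if hm : m < h then a ⟨m, hm⟩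
    else -∑ e ∈ (Finset.range h).attach,
      etaRev h η (e : ℕ) * sol h η a (m - h + (e : ℕ))
termination_by m => m
decreasing_by
  have he := Finset.mem_range.mp e.2
  omega

variable (h : ℕ) (η : Fin h → ℝ)

lemma sol_lt (a : Fin h → ℝ) {m : ℕ} (hm : m < h) : sol h η a m = a ⟨m, hm⟩ := by
  rw [sol.eq_def, dif_pos hm]

lemma sol_ge (a : Fin h → ℝ) {m : ℕ} (hm : h ≤ m) :
    sol h η a m = -∑ e ∈ Finset.range h, etaRev h η e * sol h η a (m - h + e) := by
  rw [sol.eq_def, dif_neg (by omega)]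
  congr 1
  exact Finset.sum_attach (Finset.range h) (fun e => etaRev h η e * sol h η a (m - h + e))

lemma sol_rec (a : Fin h → ℝ) (s : ℕ) :
    sol h η a (s + h) + ∑ e ∈ Finset.range h, etaRev h η e * sol h η a (s + e) = 0 := by
  have hx := sol_ge h η a (m := s + h) (by omega)
  simp only [Nat.add_sub_cancel] at hx
  rw [hx]
  ring

variable (k : ℕ)

lemma sol_kernel (hk : h + 1 ≤ k) (a : Fin h → ℝ) :
    filterMatrix h η k *ᵥ (fun i : Fin k => sol h η a (k - 1 - (i : ℕ))) = 0 := by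
  funext i
  simp only [Pi.zero_apply]
  rw [row_formula h η k hk _ i]
  have hik : (i : ℕ) + h + 1 ≤ k := by have := i.isLt; omega
  set s : ℕ := k - 1 - (i : ℕ) - h with hs
  have hpad : ∀ m : ℕ, m < k →
      padVec (fun i : Fin k => sol h η a (k - 1 - (i : ℕ))) m = sol h η a (k - 1 - m) := by
    intro m hm
    rw [padVec, dif_pos hm]
  rw [hpad (i : ℕ) (by omega)]
  have h1 : k - 1 - (i : ℕ) = s + h := by omega
  have h2 : ∀ e ∈ Finset.range h,
      padVec (fun i : Fin k => sol h η a (k - 1 - (i : ℕ))) ((i : ℕ) + h - e)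
        = sol h η a (s + e) := by
    intro e he
    have heh := Finset.mem_range.mp he
    rw [hpad ((i : ℕ) + h - e) (by omega)]
    congr 1
    omega
  have h2' : ∀ e ∈ Finset.range h,
      etaRev h η e * padVec (fun i : Fin k => sol h η a (k - 1 - (i : ℕ))) ((i : ℕ) + h - e)
        = etaRev h η e * sol h η a (s + e) := fun e he => by rw [h2 e he]
  rw [Finset.sum_congr rfl h2', h1]
  exact sol_rec h η a s

lemma kernel_zero (hk : h + 1 ≤ k) (v : Fin k → ℝ)
    (hv : filterMatrix h η k *ᵥ v = 0)
    (htop : ∀ l : Fin h, padVec v (k - 1 - (l : ℕ)) = 0) : v = 0 := by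
  have hw : ∀ m : ℕ, m < k → padVec v (k - 1 - m) = 0 := by
    intro m
    induction m using Nat.strong_induction_on with
    | _ m ih =>
      intro hmk
      by_cases hmh : m < h
      · exact htop ⟨m, hmh⟩
      · have hrec := kernel_rec h η k hk v hv (m - h) (by omega)
        rw [show m - h + h = m by omega] at hrec
        have hzero : ∀ e ∈ Finset.range h, etaRev h η e * padVec v (k - 1 - (m - h + e)) = 0 := by
          intro e he
          have heh := Finset.mem_range.mp he
          rw [ih (m - h + e) (by omega) (by omega), mul_zero]
        rw [Finset.sum_congr rfl hzero, Finset.sum_const_zero, add_zero] at hrec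
        exact hrec
  funext i
  have := hw (k - 1 - (i : ℕ)) (by omega)
  rw [show k - 1 - (k - 1 - (i : ℕ)) = (i : ℕ) by have := i.isLt; omega] at this
  rw [padVec, dif_pos i.isLt, Fin.eta] at this
  simpa using this

end solution

/-- Fix `h ≥ 1` and `η ∈ ℝ^h` such that every complex root `z` of
`φ_η(z) = 1 + η₁ z + ... + η_h z^h` satisfies `|z| ≥ 1`.  Let `Null_k(η)` be the kernel of
`D̃^(k)`.  Then there exist `C_η > 0` and `n₀` such that for every `n ≥ n₀` and `k ≥ n`
there is an orthonormal basis `ξ^(1), ..., ξ^(h)` of `Null_k(η)` with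
`|ξ_i^(j)|² ≤ C_η n^{−1}` for all `1 ≤ i ≤ k − n` and `1 ≤ j ≤ h`. -/
theorem stmt_19 (h : ℕ) (hh : 1 ≤ h) (η : Fin h → ℝ)
    (hroots : ∀ z : ℂ,
      (1 : ℂ) + ∑ l : Fin h, (η l : ℂ) * z ^ ((l : ℕ) + 1) = 0 → 1 ≤ ‖z‖) :
    ∃ C > 0, ∃ n₀ : ℕ, ∀ n ≥ n₀, ∀ k ≥ n,
      ∃ ξ : Fin h → (Fin k → ℝ),
        (∀ j, filterMatrix h η k *ᵥ ξ j = 0) ∧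
        (∀ j j', ∑ i, ξ j i * ξ j' i = if j = j' then 1 else 0) ∧
        (∀ v : Fin k → ℝ, filterMatrix h η k *ᵥ v = 0 →
          ∃ c : Fin h → ℝ, v = ∑ j, c j • ξ j) ∧
        (∀ i : Fin k, (i : ℕ) < k - n → ∀ j, (ξ j i) ^ 2 ≤ C / (n : ℝ)) := by
  classical
  have hh0 : (0:ℝ) < (h:ℝ) := by exact_mod_cast hh
  refine ⟨8 * (h:ℝ)^2 * 4^h, by positivity, 4*h+4, ?_⟩
  intro n hn k hk
  have hhk : 4*h+4 ≤ k := le_trans hn hk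
  have hk1 : h + 1 ≤ k := by omega
  have hroots' := psiC_roots_abs_le h η hh hroots
  -- the kernel as a submodule of Euclidean space
  let L : EuclideanSpace ℝ (Fin k) ≃ₗ[ℝ] (Fin k → ℝ) := WithLp.linearEquiv 2 ℝ (Fin k → ℝ)
  let Mker : Submodule ℝ (EuclideanSpace ℝ (Fin k)) :=
    LinearMap.ker ((Matrix.mulVecLin (filterMatrix h η k)).comp L.toLinearMap)
  have hmem : ∀ x : EuclideanSpace ℝ (Fin k),
      x ∈ Mker ↔ filterMatrix h η k *ᵥ (L x) = 0 := by
    intro x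
    rw [LinearMap.mem_ker, LinearMap.comp_apply, Matrix.mulVecLin_apply]
    exact Iff.rfl
  -- restriction to the top h coordinates
  let R : Mker →ₗ[ℝ] (Fin h → ℝ) :=
    (LinearMap.pi (fun l : Fin h =>
      (LinearMap.proj (⟨k - 1 - (l : ℕ), by omega⟩ : Fin k)).comp L.toLinearMap)).comp
      Mker.subtype
  have hRval : ∀ (x : Mker) (l : Fin h), R x l = (L x.1) ⟨k - 1 - (l : ℕ), by omega⟩ := by
    intro x l
    rfl
  have hRinj : Function.Injective R := by
    intro x y hxy
    have hz : R (x - y) = 0 := by rw [map_sub, hxy, sub_self]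
    have hvker : filterMatrix h η k *ᵥ (L (x - y).1) = 0 := (hmem _).mp (x - y).2
    have htop : ∀ l : Fin h, padVec (L (x - y).1) (k - 1 - (l : ℕ)) = 0 := by
      intro l
      rw [padVec, dif_pos (by omega : k - 1 - (l:ℕ) < k)]
      have := congrFun hz l
      rw [hRval] at this
      exact this
    have hzero := kernel_zero h η k hk1 (L (x - y).1) hvker htop
    have h1 : ((x - y : Mker) : EuclideanSpace ℝ (Fin k)) = 0 := by
      apply L.injective
      rw [hzero]
      exact (map_zero L).symm
    have h2 : x - y = 0 := Subtype.ext (by simpa using h1)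
    exact sub_eq_zero.mp h2
  have hRsurj : Function.Surjective R := by
    intro a
    set xa : Fin k → ℝ := fun i : Fin k => sol h η a (k - 1 - (i : ℕ)) with hxa
    have hker : filterMatrix h η k *ᵥ xa = 0 := sol_kernel h η k hk1 a
    refine ⟨⟨L.symm xa, (hmem _).mpr (by rwa [L.apply_symm_apply])⟩, ?_⟩
    funext l
    rw [hRval]
    show (L (L.symm xa)) ⟨k - 1 - (l : ℕ), _⟩ = a l
    rw [L.apply_symm_apply]
    rw [hxa]
    simp only [Fin.val_mk]
    rw [show k - 1 - (k - 1 - (l : ℕ)) = (l : ℕ) by have := l.isLt; omega]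
    rw [sol_lt h η a l.isLt, Fin.eta]
  have hrank : Module.finrank ℝ Mker = h := by
    rw [(LinearEquiv.ofBijective R ⟨hRinj, hRsurj⟩).finrank_eq]
    simp [Module.finrank_fintype_fun_eq_card]
  -- orthonormal basis
  let b := (stdOrthonormalBasis ℝ Mker).reindex (finCongr hrank)
  let A : Mker →ₗ[ℝ] (Fin k → ℝ) := L.toLinearMap.comp Mker.subtype
  set ξ : Fin h → (Fin k → ℝ) := fun j => A (b j) with hξ
  have hξker : ∀ j, filterMatrix h η k *ᵥ ξ j = 0 := fun j => (hmem _).mp (b j).2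
  have horth : ∀ j j', ∑ i, ξ j i * ξ j' i = if j = j' then 1 else 0 := by
    intro j j'
    have hON := b.orthonormal
    rw [orthonormal_iff_ite] at hON
    have hib := hON j j'
    have hinner : (inner (𝕜 := ℝ) (b j : EuclideanSpace ℝ (Fin k)) (b j' : EuclideanSpace ℝ (Fin k)))
        = ∑ i, ξ j i * ξ j' i := by
      rw [PiLp.inner_apply]
      refine Finset.sum_congr rfl fun i _ => ?_
      simp only [RCLike.inner_apply, conj_trivial]
      exact mul_comm _ _
    rw [← hinner]
    rw [← hib]
    rfl
  refine ⟨ξ, hξker, horth, ?_, ?_⟩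
  · -- spanning
    intro v hv
    set x : Mker := ⟨L.symm v, (hmem _).mpr (by rwa [L.apply_symm_apply])⟩ with hx
    refine ⟨fun j => b.repr x j, ?_⟩
    have hsum := b.sum_repr x
    have : v = A x := by
      rw [hx]
      show v = L (L.symm v)
      rw [L.apply_symm_apply]
    have hAx : A x = ∑ j, b.repr x j • A (b j) := by
      conv_lhs => rw [← hsum]
      rw [map_sum]
      exact Finset.sum_congr rfl fun j _ => by rw [LinearMap.map_smul]
    rw [this, hAx]
  · -- the entrywise bound
    intro i hi j
    set v : Fin k → ℝ := ξ j with hv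
    have hvker : filterMatrix h η k *ᵥ v = 0 := hξker j
    set N : ℕ := k - (i : ℕ) with hN
    have hik := i.isLt
    have hin : (i : ℕ) + n < k := by omega
    have hNn : n + 1 ≤ N := by omega
    have hN4 : 4*h+4 ≤ N := by omega
    set f : ℕ → ℝ := fun m => padVec v (k - 1 - m) with hf
    have hfrec : ∀ s : ℕ, s + h ≤ N - 1 →
        f (s + h) + ∑ e ∈ Finset.range h, etaRev h η e * f (s + e) = 0 := by
      intro s hs
      exact kernel_rec h η k hk1 v hvker s (by omega)
    have hmain := main_bound h η hh hroots' hN4 f hfrec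
    have hfN : f (N - 1) = v i := by
      rw [hf]
      simp only []
      rw [show k - 1 - (N - 1) = (i : ℕ) by omega]
      rw [padVec, dif_pos i.isLt, Fin.eta]
    have hsum1 : ∑ jj ∈ Finset.range N, (f jj)^2 ≤ 1 := by
      have hle : ∑ jj ∈ Finset.range N, (f jj)^2 ≤ ∑ jj ∈ Finset.range k, (f jj)^2 :=
        Finset.sum_le_sum_of_subset_of_nonneg (Finset.range_subset_range.mpr (by omega))
          (fun _ _ _ => sq_nonneg _)
      have heq : ∑ jj ∈ Finset.range k, (f jj)^2 = ∑ ii : Fin k, (v ii)^2 := by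
        have h2 : ∑ jj ∈ Finset.range k, (f jj)^2
            = ∑ jj ∈ Finset.range k, (padVec v jj)^2 :=
          Finset.sum_range_reflect (fun m => (padVec v m)^2) k
        rw [h2, ← Fin.sum_univ_eq_sum_range (fun m => (padVec v m)^2) k]
        refine Finset.sum_congr rfl fun ii _ => ?_
        rw [padVec, dif_pos ii.isLt, Fin.eta]
      have hunit : ∑ ii : Fin k, (v ii)^2 = 1 := by
        have hx := horth j j
        rw [if_pos rfl] at hx
        rw [← hx]
        exact Finset.sum_congr rfl fun ii _ => (sq (v ii)).symm ▸ (pow_two (v ii))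
      rw [heq, hunit] at hle
      exact hle
    have hN0 : (0:ℝ) < N := by exact_mod_cast (by omega : 0 < N)
    have hn0 : (0:ℝ) < n := by exact_mod_cast (by omega : 0 < n)
    have hC : (0:ℝ) ≤ 8 * (h:ℝ)^2 * 4^h := by positivity
    calc (ξ j i)^2 = (f (N - 1))^2 := by rw [hfN]
      _ ≤ (8 * (h:ℝ)^2 * 4 ^ h / N) * ∑ jj ∈ Finset.range N, (f jj) ^ 2 := hmain
      _ ≤ (8 * (h:ℝ)^2 * 4 ^ h / N) * 1 := by
          apply mul_le_mul_of_nonneg_left hsum1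
          positivity
      _ = 8 * (h:ℝ)^2 * 4 ^ h / N := mul_one _
      _ ≤ 8 * (h:ℝ)^2 * 4 ^ h / n := by
          apply div_le_div_of_nonneg_left hC hn0
          exact_mod_cast (by omega : n ≤ N)
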